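/- Let N ≥ 1 and T ≥ 1 be integers, let ε and δ be reals with 0 < ε ≤ 1 and 0 < δ < 1, and let p be a real with 1/2 ≤ p ≤ 1. If T ≥ 54·(N/ε)²·log(2N/δ), then the binomial tail probability satisfies ∑_{x ∈ {0,…,T}, |x − Tp| > Tp·ε/(3N)} C(T,x)·p^x·(1−p)^{T−x} ≤ δ/N. -/
import Mathlib
set_option maxHeartbeats 1000000

open Finset

private lemma mgf_sum (T : ℕ) (p s : ℝ) :
    ∑ x ∈ range (T+1), (T.choose x : ℝ) * p ^ x * (1-p) ^ (T-x) * Real.exp (s * x)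
      = (p * Real.exp s + (1-p)) ^ T := by
  rw [add_pow]
  refine Finset.sum_congr rfl fun x hx => ?_
  rw [mul_pow, ← Real.exp_nat_mul, mul_comm (x:ℝ) s]
  ring

private lemma tail_le (T : ℕ) (p s a : ℝ) (hp0 : 0 ≤ p) (hp1 : p ≤ 1)
    (P : ℕ → Prop) [DecidablePred P]
    (hP : ∀ x : ℕ, P x → a ≤ s * x) :
    ∑ x ∈ (range (T+1)).filter P, (T.choose x : ℝ) * p ^ x * (1-p) ^ (T-x)
      ≤ Real.exp ((T:ℝ) * p * (Real.exp s - 1) - a) := by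
  have h1p : 0 ≤ 1 - p := by linarith
  have hterm : ∀ x : ℕ, 0 ≤ (T.choose x : ℝ) * p ^ x * (1-p) ^ (T-x) := fun x => by positivity
  calc ∑ x ∈ (range (T+1)).filter P, (T.choose x : ℝ) * p ^ x * (1-p) ^ (T-x)
      ≤ ∑ x ∈ (range (T+1)).filter P,
          (T.choose x : ℝ) * p ^ x * (1-p) ^ (T-x) * Real.exp (s * x - a) := by
        refine Finset.sum_le_sum fun x hx => ?_
        have hx' := (Finset.mem_filter.mp hx).2
        have h1 : (1:ℝ) ≤ Real.exp (s * x - a) :=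
          Real.one_le_exp (by have := hP x hx'; linarith)
        nlinarith [hterm x]
    _ ≤ ∑ x ∈ range (T+1),
          (T.choose x : ℝ) * p ^ x * (1-p) ^ (T-x) * Real.exp (s * x - a) :=
        Finset.sum_le_sum_of_subset_of_nonneg (Finset.filter_subset _ _)
          (fun x _ _ => by positivity)
    _ = Real.exp (-a) * ∑ x ∈ range (T+1),
          (T.choose x : ℝ) * p ^ x * (1-p) ^ (T-x) * Real.exp (s * x) := by
        rw [Finset.mul_sum]
        refine Finset.sum_congr rfl fun x _ => ?_
        rw [Real.exp_sub, Real.exp_neg]; ring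
    _ = Real.exp (-a) * (p * Real.exp s + (1-p)) ^ T := by rw [mgf_sum]
    _ ≤ Real.exp (-a) * Real.exp ((T:ℝ) * (p * (Real.exp s - 1))) := by
        refine mul_le_mul_of_nonneg_left ?_ (Real.exp_nonneg _)
        have hb0 : (0:ℝ) ≤ p * Real.exp s + (1-p) := by positivity
        calc (p * Real.exp s + (1-p)) ^ T ≤ Real.exp (p * (Real.exp s - 1)) ^ T := by
              apply pow_le_pow_left₀ hb0
              linarith [Real.add_one_le_exp (p * (Real.exp s - 1))]
          _ = Real.exp ((T:ℝ) * (p * (Real.exp s - 1))) := (Real.exp_nat_mul _ T).symm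
    _ = Real.exp ((T:ℝ) * p * (Real.exp s - 1) - a) := by
        rw [← Real.exp_add]; ring_nf

private lemma exp_ub {c : ℝ} (h0 : 0 ≤ c) (h1 : c ≤ 1/3) :
    Real.exp c ≤ 1 + c + (2/3) * c^2 := by
  have h := Real.exp_bound (n := 3) (x := c) (by rw [abs_of_nonneg h0]; linarith) (by norm_num)
  rw [abs_of_nonneg h0] at h
  have h' := (abs_sub_le_iff.1 h).1
  simp [Finset.sum_range_succ, Nat.factorial] at h'
  nlinarith [sq_nonneg c, pow_nonneg h0 3]

private lemma exp_lb {c : ℝ} (h0 : 0 ≤ c) (h1 : c ≤ 1/3) :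
    Real.exp (-c) ≤ 1 - c + (2/3) * c^2 := by
  have h := Real.exp_bound (n := 3) (x := -c) (by rw [abs_neg, abs_of_nonneg h0]; linarith)
    (by norm_num)
  rw [abs_neg, abs_of_nonneg h0] at h
  have h' := (abs_sub_le_iff.1 h).1
  simp [Finset.sum_range_succ, Nat.factorial] at h'
  nlinarith [sq_nonneg c, pow_nonneg h0 3]

theorem stmt14 (N T : ℕ) (hN : 1 ≤ N) (hT : 1 ≤ T) (ε δ p : ℝ)
    (hε0 : 0 < ε) (hε1 : ε ≤ 1) (hδ0 : 0 < δ) (hδ1 : δ < 1)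
    (hp0 : 1 / 2 ≤ p) (hp1 : p ≤ 1)
    (hTbig : 54 * ((N : ℝ) / ε) ^ 2 * Real.log (2 * N / δ) ≤ (T : ℝ)) :
    ((Finset.range (T + 1)).filter
        (fun x : ℕ => (T : ℝ) * p * (ε / (3 * N)) < |(x : ℝ) - (T : ℝ) * p|)).sum
      (fun x : ℕ => (T.choose x : ℝ) * p ^ x * (1 - p) ^ (T - x)) ≤ δ / N := by
  classical
  set c : ℝ := ε / (3 * N) with hc
  have hN1 : (1:ℝ) ≤ N := by exact_mod_cast hN
  have hT1 : (1:ℝ) ≤ T := by exact_mod_cast hT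
  have hc0 : 0 < c := by rw [hc]; positivity
  have hc3 : c ≤ 1/3 := by
    rw [hc, div_le_div_iff₀ (by positivity) (by norm_num)]
    nlinarith
  have hp0' : (0:ℝ) ≤ p := by linarith
  have hTp : (0:ℝ) ≤ (T:ℝ) * p := by positivity
  have hm : 0 < (T:ℝ) * p * c := mul_pos (by nlinarith) hc0
  set L : ℝ := Real.log (2 * N / δ) with hL
  -- the key log bound
  have hkey : 54 * ((N:ℝ)/ε)^2 * (c^2/6) = 1 := by
    rw [hc]; field_simp; ring
  have hlog : L ≤ (T:ℝ) * p * c^2 / 3 := by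
    have h1 : 54 * ((N:ℝ)/ε)^2 * L * (c^2/6) ≤ (T:ℝ) * (c^2/6) :=
      mul_le_mul_of_nonneg_right hTbig (by positivity)
    have h2 : 54 * ((N:ℝ)/ε)^2 * L * (c^2/6) = L := by
      rw [show 54 * ((N:ℝ)/ε)^2 * L * (c^2/6) = (54 * ((N:ℝ)/ε)^2 * (c^2/6)) * L by ring,
        hkey, one_mul]
    rw [h2] at h1
    nlinarith [mul_le_mul_of_nonneg_left hp0 (by positivity : (0:ℝ) ≤ (T:ℝ)*c^2)]
  have hhalf : Real.exp (-((T:ℝ) * p * c^2 / 3)) ≤ δ / (2*N) := by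
    have h2N : (0:ℝ) < 2*N/δ := by positivity
    calc Real.exp (-((T:ℝ) * p * c^2 / 3)) ≤ Real.exp (-L) :=
          Real.exp_le_exp.2 (by linarith)
      _ = δ / (2*N) := by
          rw [Real.exp_neg, hL, Real.exp_log h2N, inv_div]
  -- split the filter
  have hsplit : ((Finset.range (T + 1)).filter
        (fun x : ℕ => (T : ℝ) * p * c < |(x : ℝ) - (T : ℝ) * p|))
      = ((Finset.range (T + 1)).filter (fun x : ℕ => (T:ℝ) * p * c < (x:ℝ) - (T:ℝ) * p))
        ∪ ((Finset.range (T + 1)).filter (fun x : ℕ => (T:ℝ) * p * c < (T:ℝ) * p - (x:ℝ))) := by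
    rw [← Finset.filter_or]
    refine Finset.filter_congr fun x _ => ?_
    rw [lt_abs, neg_sub]
  have hdisj : Disjoint
      ((Finset.range (T + 1)).filter (fun x : ℕ => (T:ℝ) * p * c < (x:ℝ) - (T:ℝ) * p))
      ((Finset.range (T + 1)).filter (fun x : ℕ => (T:ℝ) * p * c < (T:ℝ) * p - (x:ℝ))) := by
    rw [Finset.disjoint_left]
    intro x hx1 hx2
    rw [Finset.mem_filter] at hx1 hx2
    linarith [hx1.2, hx2.2]
  -- bound the upper tail
  have hup : ∑ x ∈ (Finset.range (T+1)).filter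
        (fun x : ℕ => (T:ℝ) * p * c < (x:ℝ) - (T:ℝ) * p),
        (T.choose x : ℝ) * p ^ x * (1-p) ^ (T-x) ≤ δ / (2*N) := by
    have ht := tail_le T p c (c * ((T:ℝ)*p + (T:ℝ)*p*c)) hp0' hp1
      (fun x : ℕ => (T:ℝ) * p * c < (x:ℝ) - (T:ℝ) * p)
      (fun x hx => by nlinarith)
    refine ht.trans (le_trans (Real.exp_le_exp.2 ?_) hhalf)
    have he := exp_ub hc0.le hc3
    nlinarith [sq_nonneg c]
  -- bound the lower tail
  have hlo : ∑ x ∈ (Finset.range (T+1)).filter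
        (fun x : ℕ => (T:ℝ) * p * c < (T:ℝ) * p - (x:ℝ)),
        (T.choose x : ℝ) * p ^ x * (1-p) ^ (T-x) ≤ δ / (2*N) := by
    have ht := tail_le T p (-c) (-c * ((T:ℝ)*p - (T:ℝ)*p*c)) hp0' hp1
      (fun x : ℕ => (T:ℝ) * p * c < (T:ℝ) * p - (x:ℝ))
      (fun x hx => by nlinarith)
    refine ht.trans (le_trans (Real.exp_le_exp.2 ?_) hhalf)
    have he := exp_lb hc0.le hc3
    nlinarith [sq_nonneg c]
  rw [hsplit, Finset.sum_union hdisj]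
  have hfin : δ / (2*(N:ℝ)) + δ / (2*(N:ℝ)) = δ / N := by field_simp; ring
  linarith [hup, hlo]
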